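/- Let p be an odd prime, n a positive integer, and work in ℚ[c_1,…,c_N] for N large, with derivation D defined on generators by D(c_k) = (n-k+1)c_{k-1} (and c_0 = 1), extended by the Leibniz rule. Assume p ∣ n and that all factors n-p+j (1 ≤ j ≤ (p-1)/2) are nonzero. With A_k = ∏_{j=k}^{(p-1)/2}(n-j)/(n-p+j), define X_1 = c_{(p+1)/2}^2 c_1 - (n/(n-(p+1)/2))·c_{(p+3)/2} c_{(p+1)/2} + 2∑_{k=1}^{(p-1)/2} (-1)^{(p-1)/2-k+1} A_k c_{p-k+1} c_k c_1 + ∑_{k=2}^{(p-1)/2} (-1)^{(p-1)/2-k}(p+2-2k)·(n A_k/(n-p+k-1))·c_{p-k+2} c_k. Then D(X_1) = (-1)^{(p-1)/2}(p+2)·n·A_1·c_p c_1. -/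

import Mathlib

open MvPolynomial Finset

noncomputable def gg (n m : ℕ) (A : ℕ → ℚ) (k : ℕ) : MvPolynomial ℕ ℚ :=
  C ((-1:ℚ)^(m-k+1) * A k * ((n:ℚ) - (2*(m:ℚ)+1) + (k:ℚ))) * (X (2*m+1-k) * X k * X 1)

noncomputable def hh (n m : ℕ) (A : ℕ → ℚ) (k : ℕ) : MvPolynomial ℕ ℚ :=
  C ((-1:ℚ)^(m-k+1) * A k * (n:ℚ)) * (X (2*m+2-k) * X k)

lemma tele {M : Type*} [AddCommGroup M] (g : ℕ → M) (m : ℕ) (hm : 1 ≤ m) :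
    ∑ k ∈ Icc 2 m, (g k - g (k-1)) = g m - g 1 := by
  induction m, hm using Nat.le_induction with
  | base => simp
  | succ m hm ih =>
      rw [Finset.sum_Icc_succ_top (by omega), ih]
      simp only [Nat.add_sub_cancel]
      abel

lemma icc_split {M : Type*} [AddCommMonoid M] (f : ℕ → M) (m : ℕ) (hm : 1 ≤ m) :
    ∑ k ∈ Icc 1 m, f k = f 1 + ∑ k ∈ Icc 2 m, f k := by
  have : Icc 1 m = insert 1 (Icc 2 m) := by
    ext x; simp only [Finset.mem_Icc, Finset.mem_insert]; omega
  rw [this, Finset.sum_insert (by simp [Finset.mem_Icc])]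

lemma Dmul (D : Derivation ℚ (MvPolynomial ℕ ℚ) (MvPolynomial ℕ ℚ)) (a b : MvPolynomial ℕ ℚ) :
    D (a * b) = a * D b + b * D a := by
  rw [D.leibniz, smul_eq_mul, smul_eq_mul]

lemma DCmul (D : Derivation ℚ (MvPolynomial ℕ ℚ) (MvPolynomial ℕ ℚ)) (q : ℚ) (a : MvPolynomial ℕ ℚ) :
    D (C q * a) = C q * D a := by
  rw [Dmul, show D (C q) = 0 by rw [← MvPolynomial.algebraMap_eq, Derivation.map_algebraMap], mul_zero, add_zero]

theorem stmt_10 (p n : ℕ) (hp : p.Prime) (hodd : Odd p) (hn : 0 < n) (hpn : p ∣ n)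
    (hden : ∀ j : ℕ, 1 ≤ j → j ≤ (p - 1) / 2 → ((n : ℚ) - p + j) ≠ 0)
    (A : ℕ → ℚ)
    (hA : ∀ k : ℕ, A k = ∏ j ∈ Finset.Icc k ((p - 1) / 2),
      ((n : ℚ) - j) / ((n : ℚ) - p + j))
    (D : Derivation ℚ (MvPolynomial ℕ ℚ) (MvPolynomial ℕ ℚ))
    (hD1 : D (X 1) = C (n : ℚ))
    (hDk : ∀ k : ℕ, 2 ≤ k → D (X k) = C ((n : ℚ) - k + 1) * X (k - 1)) :
    D (X ((p + 1) / 2) ^ 2 * X 1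
        - C ((n : ℚ) / ((n : ℚ) - ((p + 1) / 2 : ℕ))) * (X ((p + 3) / 2) * X ((p + 1) / 2))
        + 2 * ∑ k ∈ Finset.Icc 1 ((p - 1) / 2),
            C ((-1 : ℚ) ^ ((p - 1) / 2 - k + 1) * A k) * (X (p - k + 1) * X k * X 1)
        + ∑ k ∈ Finset.Icc 2 ((p - 1) / 2),
            C ((-1 : ℚ) ^ ((p - 1) / 2 - k) * ((p : ℚ) + 2 - 2 * k) *
                ((n : ℚ) * A k / ((n : ℚ) - p + k - 1))) * (X (p - k + 2) * X k)) =
      C ((-1 : ℚ) ^ ((p - 1) / 2) * ((p : ℚ) + 2) * n * A 1) * (X p * X 1) := by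
  obtain ⟨m, rfl⟩ : ∃ m, p = 2*m+1 := by obtain ⟨m, hm⟩ := hodd; exact ⟨m, by omega⟩
  have hm : 1 ≤ m := by have := hp.two_le; omega
  clear hp hodd hpn hn
  rw [show (2*m+1-1)/2 = m from by omega] at hden hA ⊢
  rw [show (2*m+1+1)/2 = m+1 from by omega, show (2*m+1+3)/2 = m+2 from by omega]
  -- key coefficient facts
  have hA1 : A (m+1) = 1 := by rw [hA]; simp
  have hT : ∀ j : ℕ, 1 ≤ j → j ≤ m →
      ((n:ℚ) - (2*(m:ℚ)+1) + j) * A j = ((n:ℚ) - j) * A (j+1) := by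
    intro j h1 hj
    have hsplit : Icc j m = insert j (Icc (j+1) m) := by
      ext x; simp only [Finset.mem_Icc, Finset.mem_insert]; omega
    rw [hA j, hA (j+1), hsplit, Finset.prod_insert (by simp [Finset.mem_Icc])]
    have hne := hden j h1 hj
    have key : ((n:ℚ) - (2*(m:ℚ)+1) + j) * (((n:ℚ) - (j:ℚ))/((n:ℚ) - ((2*m+1 : ℕ):ℚ) + (j:ℚ)))
        = (n:ℚ) - (j:ℚ) := by
      have hne' : ((n:ℚ) - (2*(m:ℚ)+1) + (j:ℚ)) ≠ 0 := by
        intro h; exact hne (by push_cast; linarith)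
      rw [show ((n:ℚ) - ((2*m+1:ℕ):ℚ) + (j:ℚ)) = ((n:ℚ) - (2*(m:ℚ)+1) + (j:ℚ)) from by
          push_cast; ring,
        ← mul_div_assoc]
      exact mul_div_cancel_left₀ _ hne'
    linear_combination (∏ x ∈ Icc (j+1) m, ((n:ℚ) - (x:ℚ))/((n:ℚ) - ((2*m+1:ℕ):ℚ) + (x:ℚ))) * key
  have hDX : ∀ k : ℕ, 1 ≤ k → D (X (k+1)) = C ((n:ℚ) - k) * X k := by
    intro k hk
    rw [hDk (k+1) (by omega), show k+1-1 = k from rfl, show ((n:ℚ) - (k+1:ℕ) + 1) = (n:ℚ) - k from by push_cast; ring]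
  -- the four pieces
  have hTm := hT m hm le_rfl
  rw [hA1, mul_one] at hTm
  have E1 : D (X (m+1)^2 * X 1) = C (n:ℚ) * X (m+1)^2 - 2 * gg n m A m := by
    rw [Dmul, hD1, sq (X (m+1)), Dmul, hDX m hm]
    unfold gg
    rw [show m-m+1 = 1 from by omega, show 2*m+1-m = m+1 from by omega, pow_one]
    rw [show C ((-1:ℚ) * A m * ((n:ℚ) - (2*(m:ℚ)+1) + (m:ℚ))) = - C ((n:ℚ) - (m:ℚ)) from by
      rw [show (-1:ℚ) * A m * ((n:ℚ) - (2*(m:ℚ)+1) + (m:ℚ)) = -((n:ℚ) - (m:ℚ)) from by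
        linear_combination -hTm, map_neg]]
    ring
  have E2 : D (C ((n : ℚ) / ((n : ℚ) - ((m+1 : ℕ):ℚ))) * (X (m + 2) * X (m+1)))
      = C (n:ℚ) * X (m+1)^2 - hh n m A m := by
    have hne : ((n:ℚ) - ((m+1:ℕ):ℚ)) ≠ 0 := by
      intro h; apply hden m hm le_rfl; push_cast at h ⊢; linarith
    rw [show m+2 = m+1+1 from rfl, DCmul, Dmul, hDX m hm, hDX (m+1) (by omega)]
    unfold hh
    rw [show m-m+1 = 1 from by omega, pow_one, show 2*m+2-m = m+1+1 from by omega]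
    have hc1 : C ((n:ℚ) / ((n:ℚ) - ((m+1:ℕ):ℚ))) * C ((n:ℚ) - ((m+1:ℕ):ℚ))
        = (C (n:ℚ) : MvPolynomial ℕ ℚ) := by
      rw [← map_mul]; congr 1
      exact div_mul_cancel₀ _ hne
    have hc2 : C ((n:ℚ) / ((n:ℚ) - ((m+1:ℕ):ℚ))) * C ((n:ℚ) - (m:ℚ))
        = (- C ((-1:ℚ) * A m * (n:ℚ)) : MvPolynomial ℕ ℚ) := by
      rw [← map_mul, show ((-1:ℚ) * A m * (n:ℚ)) = -(A m * (n:ℚ)) from by ring, map_neg, neg_neg]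
      congr 1
      have h2 : ((n:ℚ) - (2*(m:ℚ)+1) + (m:ℚ)) = ((n:ℚ) - ((m+1:ℕ):ℚ)) := by push_cast; ring
      rw [h2] at hTm
      rw [div_mul_eq_mul_div, div_eq_iff hne]
      linear_combination (-(n:ℚ)) * hTm
    linear_combination (X (m+1) * X (m+1)) * hc1 + (X (m+1+1) * X m) * hc2
  have E3 : D (∑ k ∈ Finset.Icc 1 m,
        C ((-1 : ℚ) ^ (m - k + 1) * A k) * (X (2*m+1 - k + 1) * X k * X 1))
      = gg n m A m + (∑ k ∈ Finset.Icc 1 m, hh n m A k) + hh n m A 1 := by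
    rw [map_sum, icc_split (fun k => D (C ((-1 : ℚ) ^ (m - k + 1) * A k)
      * (X (2*m+1 - k + 1) * X k * X 1))) m hm]
    have Hk : ∀ k ∈ Icc 2 m, D (C ((-1:ℚ)^(m-k+1) * A k) * (X (2*m+1-k+1) * X k * X 1))
        = (gg n m A k - gg n m A (k-1)) + hh n m A k := by
      intro k hk
      simp only [Finset.mem_Icc] at hk
      obtain ⟨hk2, hkm⟩ := hk
      have hTk := hT (k-1) (by omega) (by omega)
      rw [Nat.cast_sub (by omega : 1 ≤ k), show k-1+1 = k from by omega] at hTk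
      rw [DCmul, Dmul, hD1, Dmul, hDk k hk2, hDk (2*m+1-k+1) (by omega)]
      unfold gg hh
      rw [show 2*m+1-k+1-1 = 2*m+1-k from by omega,
          show 2*m+1-(k-1) = 2*m+1-k+1 from by omega,
          show 2*m+2-k = 2*m+1-k+1 from by omega]
      have cg1 : C ((-1:ℚ)^(m-k+1) * A k) * C ((n:ℚ) - ↑(2*m+1-k+1) + 1)
          = (C ((-1:ℚ)^(m-k+1) * A k * ((n:ℚ) - (2*(m:ℚ)+1) + (k:ℚ))) : MvPolynomial ℕ ℚ) := by
        rw [← map_mul]; congr 1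
        rw [show 2*m+1-k+1 = 2*m+2-k from by omega, Nat.cast_sub (by omega : k ≤ 2*m+2)]
        push_cast; ring
      have cg2 : C ((-1:ℚ)^(m-k+1) * A k) * C ((n:ℚ) - ↑k + 1)
          = (- C ((-1:ℚ)^(m-(k-1)+1) * A (k-1) * ((n:ℚ) - (2*(m:ℚ)+1) + ((k-1:ℕ):ℚ))) : MvPolynomial ℕ ℚ) := by
        rw [← map_mul, ← map_neg]; congr 1
        rw [Nat.cast_sub (by omega : 1 ≤ k), show m-(k-1)+1 = (m-k+1)+1 from by omega, pow_succ]
        linear_combination (-((-1:ℚ)^(m-k+1))) * hTk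
      have cg3 : C ((-1:ℚ)^(m-k+1) * A k) * C ((n:ℚ))
          = (C ((-1:ℚ)^(m-k+1) * A k * (n:ℚ)) : MvPolynomial ℕ ℚ) := by
        rw [← map_mul]
      linear_combination (X (2*m+1-k+1) * X k) * cg3
        + (X 1 * (X (2*m+1-k+1) * X (k-1))) * cg2
        + (X 1 * (X k * X (2*m+1-k))) * cg1
    rw [Finset.sum_congr rfl Hk, Finset.sum_add_distrib, tele (fun k => gg n m A k) m hm,
      icc_split (hh n m A) m hm]
    have Ef1 : D (C ((-1:ℚ)^(m-1+1) * A 1) * (X (2*m+1-1+1) * X 1 * X 1))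
        = gg n m A 1 + 2 * hh n m A 1 := by
      rw [DCmul, Dmul, hD1, Dmul, hD1, hDk (2*m+1-1+1) (by omega)]
      unfold gg hh
      rw [show 2*m+1-1+1-1 = 2*m+1-1 from by omega, show 2*m+2-1 = 2*m+1-1+1 from by omega]
      have cf1 : C ((-1:ℚ)^(m-1+1) * A 1) * C ((n:ℚ) - ↑(2*m+1-1+1) + 1)
          = (C ((-1:ℚ)^(m-1+1) * A 1 * ((n:ℚ) - (2*(m:ℚ)+1) + ((1:ℕ):ℚ))) : MvPolynomial ℕ ℚ) := by
        rw [← map_mul]; congr 1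
        rw [show 2*m+1-1+1 = 2*m+1 from by omega]
        push_cast; ring
      have cf2 : C ((-1:ℚ)^(m-1+1) * A 1) * C ((n:ℚ))
          = (C ((-1:ℚ)^(m-1+1) * A 1 * (n:ℚ)) : MvPolynomial ℕ ℚ) := by
        rw [← map_mul]
      linear_combination (X 1 * (X 1 * X (2*m+1-1))) * cf1
        + (2 * (X (2*m+1-1+1) * X 1)) * cf2
    rw [Ef1]
    ring
  have E4 : D (∑ k ∈ Finset.Icc 2 m,
        C ((-1 : ℚ) ^ (m - k) * (((2*m+1 : ℕ) : ℚ) + 2 - 2 * k) *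
            ((n : ℚ) * A k / ((n : ℚ) - ((2*m+1 : ℕ) : ℚ) + k - 1))) * (X (2*m+1 - k + 2) * X k))
      = C (2*(m:ℚ) - (2*(m:ℚ)+1)) * hh n m A m - C (2*((1:ℕ):ℚ) - (2*(m:ℚ)+1)) * hh n m A 1
        - 2 * ∑ k ∈ Finset.Icc 2 m, hh n m A k := by
    rw [map_sum]
    have Hk4 : ∀ k ∈ Icc 2 m, D (C ((-1 : ℚ) ^ (m - k) * (((2*m+1 : ℕ) : ℚ) + 2 - 2 * k) *
            ((n : ℚ) * A k / ((n : ℚ) - ((2*m+1 : ℕ) : ℚ) + k - 1))) * (X (2*m+1 - k + 2) * X k))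
        = (C (2*(k:ℚ) - (2*(m:ℚ)+1)) * hh n m A k
            - C (2*((k-1:ℕ):ℚ) - (2*(m:ℚ)+1)) * hh n m A (k-1)) - 2 * hh n m A k := by
      intro k hk
      simp only [Finset.mem_Icc] at hk
      obtain ⟨hk2, hkm⟩ := hk
      have hne : ((n:ℚ) - (2*(m:ℚ)+1) + (k:ℚ) - 1) ≠ 0 := by
        intro h; apply hden (k-1) (by omega) (by omega)
        rw [Nat.cast_sub (by omega : 1 ≤ k)]; push_cast at h ⊢; linarith
      have hTk := hT (k-1) (by omega) (by omega)
      rw [Nat.cast_sub (by omega : 1 ≤ k), show k-1+1 = k from by omega] at hTk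
      rw [DCmul, Dmul, hDk k hk2, hDk (2*m+1-k+2) (by omega)]
      unfold hh
      rw [show 2*m+1-k+2-1 = 2*m+2-k from by omega,
          show 2*m+2-(k-1) = 2*m+1-k+2 from by omega]
      have f1 : C ((-1 : ℚ) ^ (m - k) * (((2*m+1 : ℕ) : ℚ) + 2 - 2 * k) *
            ((n : ℚ) * A k / ((n : ℚ) - ((2*m+1 : ℕ) : ℚ) + k - 1)))
            * C ((n:ℚ) - ↑(2*m+1-k+2) + 1)
          = (C (2*(k:ℚ) - (2*(m:ℚ)+1)) * C ((-1:ℚ)^(m-k+1) * A k * (n:ℚ))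
            - 2 * C ((-1:ℚ)^(m-k+1) * A k * (n:ℚ)) : MvPolynomial ℕ ℚ) := by
        rw [← map_mul, ← map_mul,
          show ((2:MvPolynomial ℕ ℚ)) = C (2:ℚ) from (map_ofNat C 2).symm, ← map_mul, ← map_sub]
        congr 1
        rw [show 2*m+1-k+2 = 2*m+3-k from by omega, Nat.cast_sub (by omega : k ≤ 2*m+3),
          show m-k+1 = (m-k)+1 from rfl, pow_succ]
        push_cast
        field_simp
        ring
      have f2 : C ((-1 : ℚ) ^ (m - k) * (((2*m+1 : ℕ) : ℚ) + 2 - 2 * k) *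
            ((n : ℚ) * A k / ((n : ℚ) - ((2*m+1 : ℕ) : ℚ) + k - 1)))
            * C ((n:ℚ) - ↑k + 1)
          = (- (C (2*((k-1:ℕ):ℚ) - (2*(m:ℚ)+1)) * C ((-1:ℚ)^(m-(k-1)+1) * A (k-1) * (n:ℚ)))
              : MvPolynomial ℕ ℚ) := by
        rw [← map_mul, ← map_mul, ← map_neg]
        congr 1
        rw [Nat.cast_sub (by omega : 1 ≤ k), show m-(k-1)+1 = (m-k+1)+1 from by omega,
          pow_succ, show m-k+1 = (m-k)+1 from rfl, pow_succ]
        push_cast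
        rw [mul_div_assoc', div_mul_eq_mul_div, div_eq_iff hne]
        linear_combination (-((-1:ℚ)^(m-k)) * (2*(m:ℚ)+3-2*(k:ℚ)) * (n:ℚ)) * hTk
      linear_combination (X k * X (2*m+2-k)) * f1 + (X (2*m+1-k+2) * X (k-1)) * f2
    rw [Finset.sum_congr rfl Hk4, Finset.sum_sub_distrib,
      tele (fun k => C (2*(k:ℚ) - (2*(m:ℚ)+1)) * hh n m A k) m hm, ← Finset.mul_sum]
  have ER : C ((-1 : ℚ) ^ m * (((2*m+1 : ℕ) : ℚ) + 2) * n * A 1) * (X (2*m+1) * X 1)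
      = C (((2*m+1 : ℕ) : ℚ)) * hh n m A 1 + 2 * hh n m A 1 := by
    have hco : (C (((2*m+1:ℕ):ℚ)) * C ((-1:ℚ)^m * A 1 * (n:ℚ))
          + 2 * C ((-1:ℚ)^m * A 1 * (n:ℚ)) : MvPolynomial ℕ ℚ)
        = C ((-1:ℚ)^m * (((2*m+1:ℕ):ℚ)+2) * (n:ℚ) * A 1) := by
      rw [← map_mul, show ((2:MvPolynomial ℕ ℚ)) = C (2:ℚ) from (map_ofNat C 2).symm,
        ← map_mul, ← map_add]
      congr 1
      ring
    unfold hh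
    rw [show 2*m+2-1 = 2*m+1 from by omega, show m-1+1 = m from by omega]
    linear_combination (-(X (2*m+1) * X 1)) * hco
  rw [map_add, map_add, map_sub, two_mul (∑ k ∈ Finset.Icc 1 m,
        C ((-1 : ℚ) ^ (m - k + 1) * A k) * (X (2*m+1 - k + 1) * X k * X 1)), map_add,
    E1, E2, E3, E4, ER, icc_split (hh n m A) m hm,
    show C (2*(m:ℚ) - (2*(m:ℚ)+1)) = (-1 : MvPolynomial ℕ ℚ) from by
      rw [show (2*(m:ℚ) - (2*(m:ℚ)+1)) = -1 by ring]; simp,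
    show C (2*((1:ℕ):ℚ) - (2*(m:ℚ)+1)) = 2 - C (((2*m+1 : ℕ) : ℚ)) from by
      rw [show (2*((1:ℕ):ℚ) - (2*(m:ℚ)+1)) = 2 - ((2*m+1 : ℕ) : ℚ) by push_cast; ring,
        map_sub, map_ofNat]]
  ring
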